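/- Let q ≥ 1 be a natural number and let g, G : ℝ → ℝ → ℝ be kernels, each continuous on the triangular domain D_S := {(t,τ) : 0 ≤ t ≤ S, 0 ≤ τ ≤ t} for every S > 0, satisfying G(t,τ) ≥ g(t,τ) ≥ 0 for all 0 ≤ τ ≤ t. Then for all real T, t with 0 < T ≤ t: ∫₀ᵀ ( ∫_σ^t G(t,τ)·(τ−σ)^(q−1)/(q−1)! dτ ) dσ ≥ (1/q!)·( ∫₀ᵀ g(t,τ)·τ^q dτ + ∫_T^t g(t,τ)·( τ^q − (τ−T)^q ) dτ ) ≥ 0. (Equation 'the expression' in the proof of the paper's Lemma 7(a).) -/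

import Mathlib

open intervalIntegral Set
open MeasureTheory

/-- A kernel `g : ℝ → ℝ → ℝ` is continuous on the triangular domain
`D_S = {(t,τ) : 0 ≤ t ≤ S, 0 ≤ τ ≤ t}` for every `S > 0`. -/
def ContinuousOnTriangles (g : ℝ → ℝ → ℝ) : Prop :=
  ∀ S : ℝ, 0 < S →
    ContinuousOn (fun p : ℝ × ℝ => g p.1 p.2)
      {p : ℝ × ℝ | 0 ≤ p.1 ∧ p.1 ≤ S ∧ 0 ≤ p.2 ∧ p.2 ≤ p.1}

lemma slice_cont {g : ℝ → ℝ → ℝ} (hg : ContinuousOnTriangles g) {t : ℝ} (ht : 0 < t) :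
    ContinuousOn (fun τ => g t τ) (Set.Icc 0 t) :=
  (hg t ht).comp (Continuous.prodMk_right t).continuousOn
    (fun τ hτ => ⟨ht.le, le_rfl, hτ.1, hτ.2⟩)


lemma inner_calc (q : ℕ) (hq : 1 ≤ q) (τ m : ℝ) :
    (∫ σ in (0:ℝ)..m, (τ - σ) ^ (q - 1)) = (τ ^ q - (τ - m) ^ q) / q := by
  rw [integral_comp_sub_left (fun u => u ^ (q-1)) τ]
  rw [integral_pow, ← Nat.cast_add_one, Nat.sub_add_cancel hq, sub_zero]

lemma swap_id (q : ℕ) (hq : 1 ≤ q) (T t : ℝ) (hT : 0 < T) (hTt : T ≤ t)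
    (f : ℝ → ℝ) (hf : ContinuousOn f (Icc 0 t)) :
    (∫ σ in (0:ℝ)..T, ∫ τ in σ..t, f τ * (τ - σ) ^ (q - 1)) =
      (1 / (q:ℝ)) * ((∫ τ in (0:ℝ)..T, f τ * τ ^ q) +
        ∫ τ in T..t, f τ * (τ ^ q - (τ - T) ^ q)) := by
  have ht : (0:ℝ) < t := hT.trans_le hTt
  have hq0 : (q:ℝ) ≠ 0 := by positivity
  set S : Set (ℝ × ℝ) := {p : ℝ × ℝ | p.1 < p.2} with hS
  have hSmeas : MeasurableSet S :=
    (isOpen_lt continuous_fst continuous_snd).measurableSet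
  set F : ℝ × ℝ → ℝ := fun p => f p.2 * (p.2 - p.1) ^ (q - 1) with hFdef
  obtain ⟨M, hM⟩ := (isCompact_Icc : IsCompact (Icc (0:ℝ) t)).exists_bound_of_continuousOn hf
  have hint : Integrable (Function.uncurry fun σ τ => S.indicator F (σ, τ))
      ((volume.restrict (Ioc 0 T)).prod (volume.restrict (Ioc 0 t))) := by
    have huncurry : (Function.uncurry fun σ τ => S.indicator F (σ, τ)) = S.indicator F := rfl
    rw [huncurry]
    have hFc : ContinuousOn F (Icc 0 T ×ˢ Icc 0 t) := by
      apply ContinuousOn.mul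
      · exact hf.comp continuous_snd.continuousOn (fun p hp => hp.2)
      · exact Continuous.continuousOn (by continuity)
    have hmeas : AEStronglyMeasurable (S.indicator F)
        ((volume.restrict (Ioc 0 T)).prod (volume.restrict (Ioc 0 t))) := by
      rw [Measure.prod_restrict]
      apply AEStronglyMeasurable.indicator _ hSmeas
      exact (hFc.aestronglyMeasurable (measurableSet_Icc.prod measurableSet_Icc)).mono_measure
        (Measure.restrict_mono (prod_mono Ioc_subset_Icc_self Ioc_subset_Icc_self) le_rfl)
    refine Integrable.mono' (g := fun _ => |M| * (|T| + |t|) ^ (q-1))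
      (integrable_const _) hmeas ?_
    rw [Measure.prod_restrict, ae_restrict_iff' (measurableSet_Ioc.prod measurableSet_Ioc)]
    filter_upwards with p hp
    refine (norm_indicator_le_norm_self F p).trans ?_
    have hp1 : p.1 ∈ Ioc (0:ℝ) T := hp.1
    have hp2 : p.2 ∈ Ioc (0:ℝ) t := hp.2
    have hfb : ‖f p.2‖ ≤ |M| := (hM p.2 (Ioc_subset_Icc_self hp2)).trans (le_abs_self M)
    have hd : |p.2 - p.1| ≤ |T| + |t| := by
      have h1 : |p.1| ≤ |T| := by rw [abs_of_pos hp1.1, abs_of_pos hT]; exact hp1.2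
      have h2 : |p.2| ≤ |t| := by rw [abs_of_pos hp2.1, abs_of_pos ht]; exact hp2.2
      calc |p.2 - p.1| ≤ |p.2| + |p.1| := abs_sub _ _
        _ ≤ |T| + |t| := by linarith
    have : ‖F p‖ = ‖f p.2‖ * |p.2 - p.1| ^ (q-1) := by
      rw [hFdef]; simp [abs_mul, abs_pow]
    rw [this]
    exact mul_le_mul hfb (pow_le_pow_left₀ (abs_nonneg _) hd _) (by positivity) (abs_nonneg _)
  calc (∫ σ in (0:ℝ)..T, ∫ τ in σ..t, f τ * (τ - σ) ^ (q - 1))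
      = ∫ σ in Ioc (0:ℝ) T, ∫ τ in Ioc (0:ℝ) t, S.indicator F (σ, τ) := by
        rw [integral_of_le hT.le]
        refine setIntegral_congr_fun measurableSet_Ioc (fun σ hσ => ?_)
        have hind : ∀ τ, S.indicator F (σ, τ) =
            (Ioi σ).indicator (fun τ => f τ * (τ - σ) ^ (q - 1)) τ := by
          intro τ
          by_cases hc : σ < τ
          · rw [indicator_of_mem (by exact hc) F, indicator_of_mem (by exact hc)]
          · rw [indicator_of_notMem (by exact hc) F, indicator_of_notMem (by exact hc)]
        simp_rw [hind]
        rw [setIntegral_indicator measurableSet_Ioi, Ioc_inter_Ioi,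
          sup_eq_right.mpr hσ.1.le, integral_of_le (hσ.2.trans hTt)]
    _ = ∫ τ in Ioc (0:ℝ) t, ∫ σ in Ioc (0:ℝ) T, S.indicator F (σ, τ) :=
        integral_integral_swap hint
    _ = ∫ τ in Ioc (0:ℝ) t, f τ * ((τ ^ q - (τ - min T τ) ^ q) / q) := by
        refine setIntegral_congr_fun measurableSet_Ioc (fun τ hτ => ?_)
        have hind : ∀ σ, S.indicator F (σ, τ) =
            (Iio τ).indicator (fun σ => f τ * (τ - σ) ^ (q - 1)) σ := by
          intro σ
          by_cases hc : σ < τ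
          · rw [indicator_of_mem (by exact hc) F, indicator_of_mem (by exact hc)]
          · rw [indicator_of_notMem (by exact hc) F, indicator_of_notMem (by exact hc)]
        simp_rw [hind]
        rw [setIntegral_indicator measurableSet_Iio]
        have hkey : (∫ σ in Ioc (0:ℝ) T ∩ Iio τ, f τ * (τ - σ) ^ (q - 1)) =
            ∫ σ in (0:ℝ)..(min T τ), f τ * (τ - σ) ^ (q - 1) := by
          rcases le_or_gt τ T with h | h
          · have hset : Ioc (0:ℝ) T ∩ Iio τ = Ioo 0 τ := by
              ext σ
              simp only [mem_inter_iff, mem_Ioc, mem_Iio, mem_Ioo]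
              exact ⟨fun ⟨⟨h1, _⟩, h3⟩ => ⟨h1, h3⟩,
                fun ⟨h1, h3⟩ => ⟨⟨h1, h3.le.trans h⟩, h3⟩⟩
            rw [hset, min_eq_right h, integral_of_le hτ.1.le,
              integral_Ioc_eq_integral_Ioo]
          · have hset : Ioc (0:ℝ) T ∩ Iio τ = Ioc 0 T := by
              rw [inter_eq_left]
              exact fun σ hσ => lt_of_le_of_lt hσ.2 h
            rw [hset, min_eq_left h.le, integral_of_le hT.le]
        rw [hkey, intervalIntegral.integral_const_mul, inner_calc q hq]
    _ = (1 / (q:ℝ)) * ((∫ τ in (0:ℝ)..T, f τ * τ ^ q) +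
        ∫ τ in T..t, f τ * (τ ^ q - (τ - T) ^ q)) := by
        have hcont : ContinuousOn (fun τ => f τ * ((τ ^ q - (τ - min T τ) ^ q) / q))
            (Icc 0 t) := by
          apply hf.mul
          apply Continuous.continuousOn
          apply Continuous.div_const
          exact (continuous_pow q).comp continuous_id |>.sub
            (((continuous_id.sub (continuous_const.min continuous_id)).pow q))
        have hi1 : IntervalIntegrable (fun τ => f τ * ((τ ^ q - (τ - min T τ) ^ q) / q))
            volume 0 T := by
          apply ContinuousOn.intervalIntegrable
          apply hcont.mono
          rw [uIcc_of_le hT.le]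
          exact Icc_subset_Icc le_rfl hTt
        have hi2 : IntervalIntegrable (fun τ => f τ * ((τ ^ q - (τ - min T τ) ^ q) / q))
            volume T t := by
          apply ContinuousOn.intervalIntegrable
          apply hcont.mono
          rw [uIcc_of_le hTt]
          exact Icc_subset_Icc hT.le le_rfl
        rw [← integral_of_le ht.le, ← integral_add_adjacent_intervals hi1 hi2]
        have e1 : (∫ τ in (0:ℝ)..T, f τ * ((τ ^ q - (τ - min T τ) ^ q) / q)) =
            (1 / (q:ℝ)) * ∫ τ in (0:ℝ)..T, f τ * τ ^ q := by
          rw [← intervalIntegral.integral_const_mul]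
          refine integral_congr (fun τ hτ => ?_)
          rw [uIcc_of_le hT.le] at hτ
          rw [min_eq_right hτ.2, sub_self, zero_pow (by omega), sub_zero]
          field_simp
        have e2 : (∫ τ in T..t, f τ * ((τ ^ q - (τ - min T τ) ^ q) / q)) =
            (1 / (q:ℝ)) * ∫ τ in T..t, f τ * (τ ^ q - (τ - T) ^ q) := by
          rw [← intervalIntegral.integral_const_mul]
          refine integral_congr (fun τ hτ => ?_)
          rw [uIcc_of_le hTt] at hτ
          rw [min_eq_left hτ.1]
          field_simp
        rw [e1, e2]; ring

/-- **The inequality (equation "the expression") in the proof of the paper's Lemma 7(a).**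
For `0 < T ≤ t` and `0 ≤ g ≤ G` on the triangle,
`∫₀ᵀ ∫_σ^t G(t,τ)(τ-σ)^(q-1)/(q-1)! dτ dσ
  ≥ (1/q!)(∫₀ᵀ g(t,τ) τ^q dτ + ∫_T^t g(t,τ)(τ^q - (τ-T)^q) dτ) ≥ 0`. -/
theorem truncated_iterated_integral_lower_bound
    (q : ℕ) (hq : 1 ≤ q)
    (g G : ℝ → ℝ → ℝ)
    (hg_cont : ContinuousOnTriangles g)
    (hG_cont : ContinuousOnTriangles G)
    (hnonneg : ∀ t τ : ℝ, 0 ≤ τ → τ ≤ t → 0 ≤ g t τ)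
    (hdom : ∀ t τ : ℝ, 0 ≤ τ → τ ≤ t → g t τ ≤ G t τ) :
    ∀ T t : ℝ, 0 < T → T ≤ t →
      (∫ σ in (0:ℝ)..T, ∫ τ in σ..t,
          G t τ * (τ - σ) ^ (q - 1) / (Nat.factorial (q - 1) : ℝ)) ≥
        (1 / (Nat.factorial q : ℝ)) *
          ((∫ τ in (0:ℝ)..T, g t τ * τ ^ q) +
            ∫ τ in T..t, g t τ * (τ ^ q - (τ - T) ^ q)) ∧
      (1 / (Nat.factorial q : ℝ)) *
          ((∫ τ in (0:ℝ)..T, g t τ * τ ^ q) +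
            ∫ τ in T..t, g t τ * (τ ^ q - (τ - T) ^ q)) ≥ 0 := by
  intro T t hT hTt
  have ht : (0:ℝ) < t := hT.trans_le hTt
  have hgc : ContinuousOn (fun τ => g t τ) (Icc 0 t) := slice_cont hg_cont ht
  have hGc : ContinuousOn (fun τ => G t τ) (Icc 0 t) := slice_cont hG_cont ht
  refine ⟨?_, ?_⟩
  · -- main inequality
    have hfacn : q.factorial = q * (q-1).factorial := (Nat.mul_factorial_pred (by omega)).symm
    have hfac : (Nat.factorial q : ℝ) = (q : ℝ) * (Nat.factorial (q-1) : ℝ) := by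
      exact_mod_cast congrArg (Nat.cast : ℕ → ℝ) hfacn
    have h1 : (Nat.factorial (q-1) : ℝ) ≠ 0 := by positivity
    have h2 : (q:ℝ) ≠ 0 := by positivity
    have hL : (∫ σ in (0:ℝ)..T, ∫ τ in σ..t,
          G t τ * (τ - σ) ^ (q - 1) / (Nat.factorial (q - 1) : ℝ))
        = (1 / (Nat.factorial q : ℝ)) *
          ((∫ τ in (0:ℝ)..T, G t τ * τ ^ q) +
            ∫ τ in T..t, G t τ * (τ ^ q - (τ - T) ^ q)) := by
      simp only [intervalIntegral.integral_div]
      rw [swap_id q hq T t hT hTt _ hGc, hfac]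
      field_simp
    rw [ge_iff_le, hL]
    have hA : (∫ τ in (0:ℝ)..T, g t τ * τ ^ q) ≤ ∫ τ in (0:ℝ)..T, G t τ * τ ^ q := by
      apply integral_mono_on hT.le
      · exact ((hgc.mono (Icc_subset_Icc le_rfl hTt)).mul
          (continuous_pow q).continuousOn).intervalIntegrable_of_Icc hT.le
      · exact ((hGc.mono (Icc_subset_Icc le_rfl hTt)).mul
          (continuous_pow q).continuousOn).intervalIntegrable_of_Icc hT.le
      · exact fun τ hτ => mul_le_mul_of_nonneg_right
          (hdom t τ hτ.1 (hτ.2.trans hTt)) (pow_nonneg hτ.1 q)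
    have hB : (∫ τ in T..t, g t τ * (τ ^ q - (τ - T) ^ q)) ≤
        ∫ τ in T..t, G t τ * (τ ^ q - (τ - T) ^ q) := by
      apply integral_mono_on hTt
      · exact ((hgc.mono (Icc_subset_Icc hT.le le_rfl)).mul
          (Continuous.continuousOn (by continuity))).intervalIntegrable_of_Icc hTt
      · exact ((hGc.mono (Icc_subset_Icc hT.le le_rfl)).mul
          (Continuous.continuousOn (by continuity))).intervalIntegrable_of_Icc hTt
      · intro τ hτ
        have h0τ : 0 ≤ τ := hT.le.trans hτ.1
        refine mul_le_mul_of_nonneg_right (hdom t τ h0τ hτ.2) ?_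
        exact sub_nonneg.mpr (pow_le_pow_left₀ (by linarith [hτ.1]) (by linarith [hT.le]) q)
    exact mul_le_mul_of_nonneg_left (add_le_add hA hB) (by positivity)
  · -- nonnegativity
    apply mul_nonneg (by positivity)
    apply add_nonneg
    · apply intervalIntegral.integral_nonneg hT.le
      exact fun τ hτ => mul_nonneg (hnonneg t τ hτ.1 (hτ.2.trans hTt)) (pow_nonneg hτ.1 q)
    · apply intervalIntegral.integral_nonneg hTt
      intro τ hτ
      have h0τ : 0 ≤ τ := hT.le.trans hτ.1
      refine mul_nonneg (hnonneg t τ h0τ hτ.2) ?_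
      exact sub_nonneg.mpr (pow_le_pow_left₀ (by linarith [hτ.1]) (by linarith [hT.le]) q)
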